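/- Let B' : F_2^{r×m} → [0,1] be defined from an algorithm B on F_2^{r×m} by B'(x) = E_{P,T̄}[1{B(T̄(P(x))) = P(K)}] where K = {1,...,k}, P is a uniform permutation of the r rows, and T̄ a uniform invertible linear map on F_2^m applied to each row. If B always outputs either a k-subset R of [r] with the XOR of rows indexed by R equal to 0, or failure, then E_x[B'(x)] ≤ 1/binom(r,k) when x is uniform on F_2^{r×m}. -/

import Mathlib

open Finset

lemma aux_fiber_card_eq {r : ℕ} (K S : Finset (Fin r)) (h : S.card = K.card) :
    (univ.filter fun P : Equiv.Perm (Fin r) => K.image P = S).card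
      = (univ.filter fun P : Equiv.Perm (Fin r) => K.image P = K).card := by
  classical
  obtain ⟨σ, hσ⟩ : ∃ σ : Equiv.Perm (Fin r), K.image σ = S := by
    have e : {x : Fin r // x ∈ K} ≃ {x : Fin r // x ∈ S} :=
      Finset.equivOfCardEq h.symm
    refine ⟨e.extendSubtype, Finset.eq_of_subset_of_card_le ?_ ?_⟩
    · intro x hx
      obtain ⟨y, hy, rfl⟩ := mem_image.mp hx
      exact e.extendSubtype_mem y hy
    · rw [card_image_of_injective _ (Equiv.injective _), ← h]
  refine Finset.card_bij' (fun P _ => σ⁻¹ * P) (fun P _ => σ * P) ?_ ?_ ?_ ?_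
  · intro P hP
    simp only [mem_filter, mem_univ, true_and] at hP ⊢
    rw [Equiv.Perm.coe_mul, ← Finset.image_image, hP, ← hσ,
      Finset.image_image]
    simp [Function.comp_def]
  · intro P hP
    simp only [mem_filter, mem_univ, true_and] at hP ⊢
    rw [Equiv.Perm.coe_mul, ← Finset.image_image, hP, hσ]
  · intro P _; group
  · intro P _; group

lemma aux_card_perm {r k : ℕ} (K : Finset (Fin r)) (hKcard : K.card = k) :
    Fintype.card (Equiv.Perm (Fin r)) =
      r.choose k * (univ.filter fun P : Equiv.Perm (Fin r) => K.image P = K).card := by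
  classical
  rw [← Finset.card_univ,
    Finset.card_eq_sum_card_fiberwise
      (f := fun P : Equiv.Perm (Fin r) => K.image P)
      (t := Finset.univ.powersetCard k) ?_]
  · rw [Finset.sum_congr rfl (fun S hS => ?_), Finset.sum_const, smul_eq_mul,
      Finset.card_powersetCard, Finset.card_univ, Fintype.card_fin]
    exact aux_fiber_card_eq K S (by
      rw [hKcard]; exact (Finset.mem_powersetCard.mp hS).2)
  · intro P _
    rw [Finset.mem_coe, Finset.mem_powersetCard]
    exact ⟨Finset.subset_univ _, by rw [card_image_of_injective _ (Equiv.injective _), hKcard]⟩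

lemma aux_sum_swap3 {α β γ : Type*} [Fintype α] [Fintype β] [Fintype γ]
    (g : α → β → γ → ℝ) :
    ∑ a, ∑ b, ∑ c, g a b c = ∑ c, ∑ b, ∑ a, g a b c := by
  calc ∑ a, ∑ b, ∑ c, g a b c
      = ∑ a, ∑ c, ∑ b, g a b c := Finset.sum_congr rfl fun a _ => Finset.sum_comm
    _ = ∑ c, ∑ a, ∑ b, g a b c := Finset.sum_comm
    _ = ∑ c, ∑ b, ∑ a, g a b c := Finset.sum_congr rfl fun c _ => Finset.sum_comm

/-- The transformation `x ↦ (i ↦ T ⬝ x (P⁻¹ i))` is a bijection. -/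
def auxRowEquiv {r m : ℕ} (P : Equiv.Perm (Fin r))
    (T : Matrix.GeneralLinearGroup (Fin m) (ZMod 2)) :
    (Fin r → Fin m → ZMod 2) ≃ (Fin r → Fin m → ZMod 2) where
  toFun x := fun i => (T : Matrix (Fin m) (Fin m) (ZMod 2)).mulVec (x (P⁻¹ i))
  invFun y := fun i => ((T⁻¹ : Matrix.GeneralLinearGroup (Fin m) (ZMod 2)) :
      Matrix (Fin m) (Fin m) (ZMod 2)).mulVec (y (P i))
  left_inv x := by
    funext i
    simp only [Equiv.Perm.inv_def, Equiv.symm_apply_apply, Matrix.mulVec_mulVec, Units.inv_mul,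
      Matrix.one_mulVec]
  right_inv y := by
    funext i
    simp only [Equiv.Perm.inv_def, Equiv.apply_symm_apply, Matrix.mulVec_mulVec, Units.mul_inv,
      Matrix.one_mulVec]

theorem stmt15 (r m k : ℕ) (hk : 1 ≤ k) (hkr : k ≤ r) (hm : 1 ≤ m)
    (Ω : Type*) [Fintype Ω] [Nonempty Ω] [DecidableEq Ω]
    (B : Ω → (Fin r → Fin m → ZMod 2) → Option (Finset (Fin r)))
    (hB : ∀ (ω : Ω) (x : Fin r → Fin m → ZMod 2) (R : Finset (Fin r)),
      B ω x = some R → R.card = k ∧ (∑ i ∈ R, x i) = 0) :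
    (∑ x : Fin r → Fin m → ZMod 2,
        (∑ ω : Ω, ∑ P : Equiv.Perm (Fin r),
            ∑ T : Matrix.GeneralLinearGroup (Fin m) (ZMod 2),
            (if B ω (fun i => (T : Matrix (Fin m) (Fin m) (ZMod 2)).mulVec (x (P⁻¹ i)))
                = some ((Finset.univ.filter (fun i : Fin r => (i : ℕ) < k)).image P)
              then (1 : ℝ) else 0)) /
          (Fintype.card Ω * Fintype.card (Equiv.Perm (Fin r)) *
            Fintype.card (Matrix.GeneralLinearGroup (Fin m) (ZMod 2)))) /
        2 ^ (r * m)
      ≤ 1 / (r.choose k : ℝ) := by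
  classical
  set K : Finset (Fin r) := Finset.univ.filter (fun i : Fin r => (i : ℕ) < k) with hKdef
  have hKcard : K.card = k := by
    have hKeq : K = Finset.map (Fin.castLEEmb hkr) Finset.univ := by
      ext i
      simp only [hKdef, mem_filter, mem_univ, true_and, mem_map, Fin.castLEEmb_apply]
      constructor
      · intro h; exact ⟨⟨(i : ℕ), h⟩, rfl⟩
      · rintro ⟨j, rfl⟩; exact j.isLt
    rw [hKeq, Finset.card_map, Finset.card_univ, Fintype.card_fin]
  set FK : ℕ := (univ.filter fun P : Equiv.Perm (Fin r) => K.image P = K).card with hFKdef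
  -- cardinalities
  set cΩ : ℕ := Fintype.card Ω
  set cGL : ℕ := Fintype.card (Matrix.GeneralLinearGroup (Fin m) (ZMod 2))
  have hcΩ : 0 < cΩ := Fintype.card_pos
  have hcGL : 0 < cGL := Fintype.card_pos
  have hperm : Fintype.card (Equiv.Perm (Fin r)) = r.choose k * FK :=
    aux_card_perm K hKcard
  have hXcard : Fintype.card (Fin r → Fin m → ZMod 2) = 2 ^ (r * m) := by
    simp [Fintype.card_fun, ZMod.card, ← pow_mul, mul_comm m r]
  have hchoose : 0 < r.choose k := Nat.choose_pos hkr
  -- the key counting bound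
  have key : (∑ x : Fin r → Fin m → ZMod 2, ∑ ω : Ω, ∑ P : Equiv.Perm (Fin r),
        ∑ T : Matrix.GeneralLinearGroup (Fin m) (ZMod 2),
        (if B ω (fun i => (T : Matrix (Fin m) (Fin m) (ZMod 2)).mulVec (x (P⁻¹ i)))
            = some (K.image P) then (1 : ℝ) else 0))
      ≤ (cΩ : ℝ) * cGL * 2 ^ (r * m) * FK := by
    rw [Finset.sum_comm]
    have hω : ∀ ω : Ω, (∑ x : Fin r → Fin m → ZMod 2, ∑ P : Equiv.Perm (Fin r),
        ∑ T : Matrix.GeneralLinearGroup (Fin m) (ZMod 2),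
        (if B ω (fun i => (T : Matrix (Fin m) (Fin m) (ZMod 2)).mulVec (x (P⁻¹ i)))
            = some (K.image P) then (1 : ℝ) else 0))
          ≤ (cGL : ℝ) * 2 ^ (r * m) * FK := by
      intro ω
      -- move T outermost, then P, then x
      rw [show (∑ x : Fin r → Fin m → ZMod 2, ∑ P : Equiv.Perm (Fin r),
          ∑ T : Matrix.GeneralLinearGroup (Fin m) (ZMod 2),
          (if B ω (fun i => (T : Matrix (Fin m) (Fin m) (ZMod 2)).mulVec (x (P⁻¹ i)))
              = some (K.image P) then (1 : ℝ) else 0))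
        = ∑ T : Matrix.GeneralLinearGroup (Fin m) (ZMod 2),
          ∑ P : Equiv.Perm (Fin r), ∑ x : Fin r → Fin m → ZMod 2,
          (if B ω (fun i => (T : Matrix (Fin m) (Fin m) (ZMod 2)).mulVec (x (P⁻¹ i)))
              = some (K.image P) then (1 : ℝ) else 0) from
        aux_sum_swap3 _]
      have hT : ∀ T : Matrix.GeneralLinearGroup (Fin m) (ZMod 2),
          (∑ P : Equiv.Perm (Fin r), ∑ x : Fin r → Fin m → ZMod 2,
          (if B ω (fun i => (T : Matrix (Fin m) (Fin m) (ZMod 2)).mulVec (x (P⁻¹ i)))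
              = some (K.image P) then (1 : ℝ) else 0))
            ≤ (2 : ℝ) ^ (r * m) * FK := by
        intro T
        have hbij : ∀ P : Equiv.Perm (Fin r),
            (∑ x : Fin r → Fin m → ZMod 2,
              (if B ω (fun i => (T : Matrix (Fin m) (Fin m) (ZMod 2)).mulVec (x (P⁻¹ i)))
                  = some (K.image P) then (1 : ℝ) else 0))
            = ∑ y : Fin r → Fin m → ZMod 2,
              (if B ω y = some (K.image P) then (1 : ℝ) else 0) := by
          intro P
          exact Equiv.sum_comp (auxRowEquiv P T)
            (fun y => if B ω y = some (K.image P) then (1 : ℝ) else 0)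
        rw [Finset.sum_congr rfl fun P _ => hbij P, Finset.sum_comm]
        have hy : ∀ y : Fin r → Fin m → ZMod 2,
            (∑ P : Equiv.Perm (Fin r),
              (if B ω y = some (K.image P) then (1 : ℝ) else 0)) ≤ (FK : ℝ) := by
          intro y
          rw [Finset.sum_boole]
          norm_cast
          rcases hBy : B ω y with _ | S
          · simp
          · have hScard : S.card = K.card := by
              rw [hKcard]; exact (hB ω y S hBy).1
            have hfe : (univ.filter fun P : Equiv.Perm (Fin r) =>
                    some S = some (K.image P))
                = univ.filter fun P : Equiv.Perm (Fin r) => K.image P = S := by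
              apply Finset.filter_congr
              intro P _
              simp [eq_comm]
            rw [hfe]
            exact le_of_eq (aux_fiber_card_eq K S hScard)
        calc (∑ y : Fin r → Fin m → ZMod 2, ∑ P : Equiv.Perm (Fin r),
                (if B ω y = some (K.image P) then (1 : ℝ) else 0))
            ≤ ∑ _y : Fin r → Fin m → ZMod 2, (FK : ℝ) :=
              Finset.sum_le_sum fun y _ => hy y
          _ = (2 : ℝ) ^ (r * m) * FK := by
              rw [Finset.sum_const, Finset.card_univ, hXcard, nsmul_eq_mul]
              push_cast
              ring
      calc (∑ T : Matrix.GeneralLinearGroup (Fin m) (ZMod 2),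
              ∑ P : Equiv.Perm (Fin r), ∑ x : Fin r → Fin m → ZMod 2,
              (if B ω (fun i => (T : Matrix (Fin m) (Fin m) (ZMod 2)).mulVec (x (P⁻¹ i)))
                  = some (K.image P) then (1 : ℝ) else 0))
          ≤ ∑ _T : Matrix.GeneralLinearGroup (Fin m) (ZMod 2), (2 : ℝ) ^ (r * m) * FK :=
            Finset.sum_le_sum fun T _ => hT T
        _ = (cGL : ℝ) * 2 ^ (r * m) * FK := by
            rw [Finset.sum_const, Finset.card_univ, nsmul_eq_mul]; ring
    calc (∑ ω : Ω, ∑ x : Fin r → Fin m → ZMod 2, ∑ P : Equiv.Perm (Fin r),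
            ∑ T : Matrix.GeneralLinearGroup (Fin m) (ZMod 2),
            (if B ω (fun i => (T : Matrix (Fin m) (Fin m) (ZMod 2)).mulVec (x (P⁻¹ i)))
                = some (K.image P) then (1 : ℝ) else 0))
        ≤ ∑ _ω : Ω, (cGL : ℝ) * 2 ^ (r * m) * FK := Finset.sum_le_sum fun ω _ => hω ω
      _ = (cΩ : ℝ) * cGL * 2 ^ (r * m) * FK := by
          rw [Finset.sum_const, Finset.card_univ, nsmul_eq_mul]; ring
  -- now the algebra
  rw [← Finset.sum_div, div_div, div_le_div_iff₀ (by positivity) (by positivity)]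
  calc (∑ x : Fin r → Fin m → ZMod 2, ∑ ω : Ω, ∑ P : Equiv.Perm (Fin r),
          ∑ T : Matrix.GeneralLinearGroup (Fin m) (ZMod 2),
          (if B ω (fun i => (T : Matrix (Fin m) (Fin m) (ZMod 2)).mulVec (x (P⁻¹ i)))
              = some (K.image P) then (1 : ℝ) else 0)) * (r.choose k : ℝ)
      ≤ ((cΩ : ℝ) * cGL * 2 ^ (r * m) * FK) * (r.choose k : ℝ) := by
        apply mul_le_mul_of_nonneg_right key (by positivity)
    _ = 1 * ((cΩ : ℝ) * (Fintype.card (Equiv.Perm (Fin r)) : ℝ) * cGL * 2 ^ (r * m)) := by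
        rw [hperm]; push_cast; ring
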